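/- Let n ∈ [0, 7/2], ε > 0, and h(s) = s^{5-n}/(s^{4-n} + ε). Then for all s > 0, |h''(s)| ≤ 2^{-(7-2n)/(2(4-n))} · (4-n)(5-n) · ε^{1/(2(4-n))} · s^{-3/2}. -/

import Mathlib

/-- For `n ∈ [0,7/2]`, `ε > 0`, and `h(s) = s^{5-n}/(s^{4-n}+ε)`:
`|h''(s)| ≤ 2^{-(7-2n)/(2(4-n))}(4-n)(5-n) ε^{1/(2(4-n))} s^{-3/2}` for `s > 0`. -/
theorem stmt_5 (n ε : ℝ) (hn : n ∈ Set.Icc (0:ℝ) (7/2)) (hε : 0 < ε) :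
    ∀ s : ℝ, 0 < s →
      |deriv (deriv (fun t : ℝ => t ^ (5 - n) / (t ^ (4 - n) + ε))) s|
        ≤ (2:ℝ) ^ (-((7 - 2*n) / (2 * (4 - n)))) * ((4 - n) * (5 - n))
            * ε ^ (1 / (2 * (4 - n))) * s ^ (-(3:ℝ)/2) := by
  obtain ⟨hn0, hn7⟩ := hn
  intro s hs
  -- Step 1: the first derivative on (0,∞)
  have hd1 : ∀ t : ℝ, 0 < t →
      deriv (fun t : ℝ => t ^ (5 - n) / (t ^ (4 - n) + ε)) t
        = ((t ^ (4-n)) ^ 2 + (5-n) * ε * t ^ (4-n)) / ((t ^ (4-n) + ε) ^ 2) := by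
    intro t ht
    have hden : t ^ (4 - n) + ε ≠ 0 := by positivity
    have h1 : HasDerivAt (fun t : ℝ => t ^ (5 - n)) ((5-n) * t ^ (5-n-1)) t :=
      Real.hasDerivAt_rpow_const (Or.inl ht.ne')
    have h2 : HasDerivAt (fun t : ℝ => t ^ (4 - n) + ε) ((4-n) * t ^ (4-n-1)) t :=
      (Real.hasDerivAt_rpow_const (Or.inl ht.ne')).add_const ε
    rw [show (fun t : ℝ => t ^ (5 - n) / (t ^ (4 - n) + ε)) = (fun t : ℝ => t ^ (5 - n)) / (fun t : ℝ => t ^ (4 - n) + ε) from rfl, (h1.div h2 hden).deriv]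
    have e1 : t ^ (5-n-1) = t ^ (4-n) := by rw [show (5-n-1:ℝ) = 4-n by ring]
    have e2 : t ^ (5-n) = t ^ (4-n) * t := by
      rw [show (5-n : ℝ) = (4-n) + 1 by ring, Real.rpow_add ht, Real.rpow_one]
    have e3 : t ^ (4-n-1) = t ^ (4-n) / t := by
      rw [show (4-n-1 : ℝ) = (4-n) - 1 by ring, Real.rpow_sub ht, Real.rpow_one]
    rw [e1, e2, e3]
    field_simp
    ring
  -- Step 2: replace deriv h by the explicit first derivative near s
  have heq : deriv (fun t : ℝ => t ^ (5 - n) / (t ^ (4 - n) + ε))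
      =ᶠ[nhds s] fun t : ℝ =>
        ((t ^ (4-n)) ^ 2 + (5-n) * ε * t ^ (4-n)) / ((t ^ (4-n) + ε) ^ 2) :=
    Filter.eventuallyEq_of_mem (Ioi_mem_nhds hs) (fun t ht => hd1 t ht)
  rw [heq.deriv_eq]
  -- Step 3: compute the second derivative at s
  have hb : (0:ℝ) < 4 - n := by linarith
  have hx : (0:ℝ) < s ^ (4-n) := Real.rpow_pos_of_pos hs _
  have hd2 : deriv (fun t : ℝ =>
        ((t ^ (4-n)) ^ 2 + (5-n) * ε * t ^ (4-n)) / ((t ^ (4-n) + ε) ^ 2)) s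
      = (4-n) * s ^ (4-n-1) * ε * ((5-n)*ε - (3-n) * s ^ (4-n)) / (s ^ (4-n) + ε) ^ 3 := by
    have hDne : ((s ^ (4-n) + ε) ^ 2 : ℝ) ≠ 0 := by positivity
    have hu : HasDerivAt (fun t : ℝ => t ^ (4-n)) ((4-n) * s ^ (4-n-1)) s :=
      Real.hasDerivAt_rpow_const (Or.inl hs.ne')
    have hN : HasDerivAt (fun t : ℝ => (t ^ (4-n)) ^ 2 + (5-n) * ε * t ^ (4-n))
        ((2:ℕ) * (s ^ (4-n)) ^ 1 * ((4-n) * s ^ (4-n-1))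
          + (5-n) * ε * ((4-n) * s ^ (4-n-1))) s :=
      (hu.pow 2).add (hu.const_mul ((5-n) * ε))
    have hD : HasDerivAt (fun t : ℝ => (t ^ (4-n) + ε) ^ 2)
        ((2:ℕ) * (s ^ (4-n) + ε) ^ 1 * ((4-n) * s ^ (4-n-1))) s :=
      (hu.add_const ε).pow 2
    rw [show (fun t : ℝ => ((t ^ (4-n)) ^ 2 + (5-n) * ε * t ^ (4-n)) / ((t ^ (4-n) + ε) ^ 2)) = (fun t : ℝ => (t ^ (4-n)) ^ 2 + (5-n) * ε * t ^ (4-n)) / (fun t : ℝ => (t ^ (4-n) + ε) ^ 2) from rfl, (hN.div hD hDne).deriv]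
    have hne : (s ^ (4-n) + ε : ℝ) ≠ 0 := by positivity
    field_simp
    ring
  rw [hd2]
  -- Step 4: the inequality
  set c : ℝ := (7 - 2*n) / (2 * (4 - n)) with hc
  set x : ℝ := s ^ (4-n) with hxdef
  have hs1 : (0:ℝ) < s ^ (4-n-1) := Real.rpow_pos_of_pos hs _
  have hxe : (0:ℝ) < x + ε := by linarith
  have hc0 : 0 ≤ c := by rw [hc]; apply div_nonneg <;> linarith
  have hc1 : c ≤ 1 := by
    rw [hc, div_le_one (by linarith)]; linarith
  have habs : |(5-n)*ε - (3-n)*x| ≤ (5-n) * (ε + x) := by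
    have h1 : |(5-n)*ε - (3-n)*x| ≤ |(5-n)*ε| + |(3-n)*x| := abs_sub _ _
    have h2 : |(5-n)*ε| = (5-n)*ε := abs_of_nonneg (by nlinarith)
    have h3 : |(3-n)*x| ≤ (5-n)*x := by
      rw [abs_mul, abs_of_pos hx]
      have : |3-n| ≤ 5-n := by rw [abs_le]; constructor <;> linarith
      nlinarith
    calc |(5-n)*ε - (3-n)*x| ≤ (5-n)*ε + (5-n)*x := by linarith
    _ = (5-n)*(ε+x) := by ring
  have step1 : |(4-n) * s ^ (4-n-1) * ε * ((5-n)*ε - (3-n) * x) / (x + ε) ^ 3|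
      ≤ (4-n) * (5-n) * ε * s ^ (4-n-1) / (x + ε) ^ 2 := by
    rw [abs_div, abs_of_pos (by positivity : (0:ℝ) < (x+ε)^3), abs_mul,
      abs_of_pos (by positivity : (0:ℝ) < (4-n) * s ^ (4-n-1) * ε)]
    rw [div_le_div_iff₀ (by positivity) (by positivity)]
    calc (4-n) * s ^ (4-n-1) * ε * |(5-n)*ε - (3-n)*x| * (x+ε)^2
        ≤ (4-n) * s ^ (4-n-1) * ε * ((5-n)*(ε+x)) * (x+ε)^2 := by
          have ha : (0:ℝ) ≤ (4-n) * s ^ (4-n-1) * ε := by positivity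
          exact mul_le_mul_of_nonneg_right (mul_le_mul_of_nonneg_left habs ha) (sq_nonneg _)
      _ = (4-n) * (5-n) * ε * s ^ (4-n-1) * (x+ε)^3 := by ring
  have key2 : (2:ℝ)^c * ε^c * x^(2-c) ≤ (x+ε)^2 := by
    have h4 : 2*ε*x ≤ (x+ε)^2 := by nlinarith
    have h5 : x^2 ≤ (x+ε)^2 := by nlinarith
    have heq2 : (2:ℝ)^c * ε^c * x^(2-c) = (2*ε*x)^c * ((x^2:ℝ))^(1-c) := by
      rw [Real.mul_rpow (by positivity) hx.le, Real.mul_rpow (by norm_num) hε.le,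
        ← Real.rpow_natCast x 2, ← Real.rpow_mul hx.le,
        show (2-c : ℝ) = c + (2:ℕ)*(1-c) by push_cast; ring, Real.rpow_add hx]
      push_cast
      ring
    rw [heq2]
    calc (2*ε*x)^c * ((x^2:ℝ))^(1-c) ≤ ((x+ε)^2)^c * ((x+ε)^2)^(1-c) := by
          apply mul_le_mul
          · exact Real.rpow_le_rpow (by positivity) h4 hc0
          · exact Real.rpow_le_rpow (by positivity) h5 (by linarith)
          · positivity
          · positivity
      _ = ((x+ε)^2 : ℝ)^(c + (1-c)) := (Real.rpow_add (by positivity) _ _).symm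
      _ = (x+ε)^2 := by norm_num
  have step2 : ε * s ^ (4-n-1)
      ≤ (2:ℝ)^(-c) * ε ^ (1/(2*(4-n))) * s ^ (-(3:ℝ)/2) * (x+ε)^2 := by
    have h6 : (2:ℝ)^(-c) * ε ^ (1/(2*(4-n))) * s ^ (-(3:ℝ)/2) * ((2:ℝ)^c * ε^c * x^(2-c))
        ≤ (2:ℝ)^(-c) * ε ^ (1/(2*(4-n))) * s ^ (-(3:ℝ)/2) * (x+ε)^2 := by
      apply mul_le_mul_of_nonneg_left key2 (by positivity)
    refine le_trans (le_of_eq ?_) h6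
    have e2 : (2:ℝ)^(-c) * (2:ℝ)^c = 1 := by
      rw [← Real.rpow_add (by norm_num)]; norm_num
    have eε : ε ^ (1/(2*(4-n))) * ε^c = ε := by
      rw [← Real.rpow_add hε, hc]
      rw [show 1/(2*(4-n)) + (7-2*n)/(2*(4-n)) = 1 by field_simp; ring]
      exact Real.rpow_one ε
    have ex : x^(2-c) = s ^ ((4-n)*(2-c)) := by
      rw [hxdef, ← Real.rpow_mul hs.le]
    have es : s ^ (-(3:ℝ)/2) * s ^ ((4-n)*(2-c)) = s ^ (4-n-1) := by
      rw [← Real.rpow_add hs]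
      congr 1
      rw [hc]
      field_simp
      ring
    calc ε * s ^ (4-n-1) = ((2:ℝ)^(-c) * (2:ℝ)^c) * (ε ^ (1/(2*(4-n))) * ε^c)
          * (s ^ (-(3:ℝ)/2) * s ^ ((4-n)*(2-c))) := by rw [e2, eε, es]; ring
      _ = (2:ℝ)^(-c) * ε ^ (1/(2*(4-n))) * s ^ (-(3:ℝ)/2) * ((2:ℝ)^c * ε^c * x^(2-c)) := by
          rw [ex]; ring
  calc |(4-n) * s ^ (4-n-1) * ε * ((5-n)*ε - (3-n) * x) / (x + ε) ^ 3|
      ≤ (4-n) * (5-n) * ε * s ^ (4-n-1) / (x + ε) ^ 2 := step1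
    _ ≤ (2:ℝ) ^ (-c) * ((4 - n) * (5 - n)) * ε ^ (1 / (2 * (4 - n))) * s ^ (-(3:ℝ)/2) := by
        rw [div_le_iff₀ (by positivity)]
        have := mul_le_mul_of_nonneg_left step2 (by nlinarith : (0:ℝ) ≤ (4-n)*(5-n))
        nlinarith [this]
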